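/- (Exchange lemma) Let F be a stack on K and ⟨κ_1, …, κ_i, κ_{i+1}, …, κ_k⟩ be a simplex-wise F-sequence with k ≥ 2. If F(κ_i) > F(κ_{i+1}) for some 1 ≤ i ≤ k−1, then the sequence obtained by swapping κ_i and κ_{i+1} is again a simplex-wise F-sequence. -/
import Mathlib


open Finset

abbrev Simplex : Type := Finset ℕ
abbrev Cplx : Type := Finset (Finset ℕ)

/-- A simplicial complex: a finite set of nonempty finite sets closed under
taking nonempty subsets. -/
def IsSimpComplex (K : Cplx) : Prop :=
  (∀ τ ∈ K, τ.Nonempty) ∧ ∀ τ ∈ K, ∀ σ : Simplex, σ ⊆ τ → σ.Nonempty → σ ∈ K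

/-- A cosimplicial complex: for all σ, τ ∈ S, every ν with σ ⊆ ν ⊆ τ is in S. -/
def IsCosimplicial (S : Cplx) : Prop :=
  ∀ σ ∈ S, ∀ τ ∈ S, ∀ ν : Simplex, σ ⊆ ν → ν ⊆ τ → ν ∈ S

/-- S is open for K. -/
def IsOpenFor (K S : Cplx) : Prop :=
  S ⊆ K ∧ ∀ σ ∈ S, ∀ τ ∈ K, σ ⊆ τ → τ ∈ S

/-- S is closed for K. -/
def IsClosedFor (K S : Cplx) : Prop :=
  S ⊆ K ∧ IsSimpComplex S

/-- Closure of a finite set of simplexes: all nonempty subsets of members. -/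
def cl (S : Cplx) : Cplx :=
  S.biUnion fun τ => τ.powerset.filter fun σ => σ.Nonempty

/-- (σ, τ) is a free pair for K: τ is the only face of K properly containing σ. -/
def IsFreePair (K : Cplx) (σ τ : Simplex) : Prop :=
  σ ∈ K ∧ τ ∈ K ∧ σ ⊂ τ ∧ ∀ ρ ∈ K, σ ⊂ ρ → ρ = τ

/-- K' is an elementary expansion of K. -/
def ElemExpansion (K' K : Cplx) : Prop :=
  ∃ σ τ : Simplex, σ ∉ K ∧ τ ∉ K ∧ K' = K ∪ {σ, τ} ∧ IsFreePair K' σ τ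

/-- K' is an elementary filling of K: K' = K ∪ {ν} with ν a facet of K'. -/
def ElemFilling (K' K : Cplx) : Prop :=
  ∃ ν : Simplex, ν ∉ K ∧ K' = insert ν K ∧ ∀ ρ ∈ K', ν ⊆ ρ → ρ = ν

/-- A collapses onto B: a sequence of elementary collapses from A to B. -/
def Collapses (A B : Cplx) : Prop :=
  Relation.ReflTransGen (fun X Y : Cplx => ElemExpansion X Y) A B

/-- A Morse sequence from L to K, as W 0, …, W k, consisting of simplicial
complexes, each step an elementary expansion or an elementary filling. -/
def MorseSeq (L K : Cplx) (k : ℕ) (W : ℕ → Cplx) : Prop :=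
  W 0 = L ∧ W k = K ∧ (∀ i ≤ k, IsSimpComplex (W i)) ∧
  ∀ i < k, ElemExpansion (W (i+1)) (W i) ∨ ElemFilling (W (i+1)) (W i)

/-- F is a stack on S: monotone with respect to inclusion. -/
def IsStackOn (S : Cplx) (F : Simplex → ℤ) : Prop :=
  ∀ σ ∈ S, ∀ τ ∈ S, σ ⊆ τ → F σ ≤ F τ

/-- (σ, τ) is a regular pair of the Morse sequence W (of length k). -/
def RegularPair (k : ℕ) (W : ℕ → Cplx) (σ τ : Simplex) : Prop :=
  ∃ i < k, σ ∉ W i ∧ τ ∉ W i ∧ W (i+1) = W i ∪ {σ, τ} ∧ IsFreePair (W (i+1)) σ τ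

/-- An F-sequence: a Morse sequence whose regular pairs satisfy F σ = F τ. -/
def FSeq (F : Simplex → ℤ) (L K : Cplx) (k : ℕ) (W : ℕ → Cplx) : Prop :=
  MorseSeq L K k W ∧ ∀ σ τ : Simplex, RegularPair k W σ τ → F σ = F τ

/-- A flooding sequence: an F-sequence from ∅ to K such that F σ ≤ F τ whenever
σ ∈ K_i and τ ∈ K_j appears strictly later (τ ∉ K_i), with i < j. -/
def Flooding (F : Simplex → ℤ) (K : Cplx) (k : ℕ) (W : ℕ → Cplx) : Prop :=
  FSeq F ∅ K k W ∧
  ∀ i j : ℕ, i < j → j ≤ k → ∀ σ ∈ W i, ∀ τ ∈ W j, τ ∉ W i → F σ ≤ F τ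

/-- Coboundary δ(ν, S) of ν in S. -/
def cob (S : Cplx) (ν : Simplex) : Cplx :=
  S.filter fun μ => ν ⊆ μ ∧ μ.card = ν.card + 1

/-- Boundary ∂(ν, S) of ν in S. -/
def bdry (S : Cplx) (ν : Simplex) : Cplx :=
  S.filter fun η => η ⊆ ν ∧ η.card + 1 = ν.card

/-- An item of a simplex-wise Morse sequence: either a critical simplex or a
regular pair. -/
inductive MorseItem where
  | crit (ν : Simplex)
  | pair (σ τ : Simplex)

/-- The set of faces added by an item. -/
def MorseItem.faces : MorseItem → Cplx
  | .crit ν => {ν}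
  | .pair σ τ => {σ, τ}

/-- The F-value of an item (F((σ,τ)) := F σ). -/
def MorseItem.val (F : Simplex → ℤ) : MorseItem → ℤ
  | .crit ν => F ν
  | .pair σ _ => F σ

/-- The item is a valid step (filling / F-expansion) from the complex K. -/
def StepOK (F : Simplex → ℤ) (K : Cplx) : MorseItem → Prop
  | .crit ν => ν ∉ K ∧ IsSimpComplex (insert ν K) ∧ ∀ ρ ∈ insert ν K, ν ⊆ ρ → ρ = ν
  | .pair σ τ => σ ∉ K ∧ τ ∉ K ∧ IsSimpComplex (K ∪ {σ, τ}) ∧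
      IsFreePair (K ∪ {σ, τ}) σ τ ∧ F σ = F τ

/-- The list of items is a simplex-wise F-sequence starting from K. -/
def SWSeq (F : Simplex → ℤ) : Cplx → List MorseItem → Prop
  | _, [] => True
  | K, it :: rest => StepOK F K it ∧ SWSeq F (K ∪ it.faces) rest

section Aux

lemma cplx_union_singleton (s : Cplx) (a : Simplex) : s ∪ {a} = insert a s := by
  ext x; simp [Finset.mem_union, Finset.mem_insert, or_comm]

lemma build_mono (S : Cplx) (l : List MorseItem) :
    S ⊆ List.foldl (fun C it => C ∪ it.faces) S l := by
  induction l generalizing S with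
  | nil => simp
  | cons x xs ih =>
      exact fun t ht => ih (S ∪ x.faces) (Finset.mem_union_left _ ht)

lemma swseq_append (F : Simplex → ℤ) :
    ∀ (l₁ : List MorseItem) (C : Cplx) (l₂ : List MorseItem),
      SWSeq F C (l₁ ++ l₂) →
      SWSeq F (List.foldl (fun C it => C ∪ it.faces) C l₁) l₂ := by
  intro l₁
  induction l₁ with
  | nil => intro C l₂ h; simpa using h
  | cons x xs ih => intro C l₂ h; exact ih (C ∪ x.faces) l₂ h.2

lemma stepOK_simp {F : Simplex → ℤ} {C : Cplx} {it : MorseItem}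
    (h : StepOK F C it) : IsSimpComplex (C ∪ it.faces) := by
  cases it with
  | crit ν =>
      show IsSimpComplex (C ∪ {ν})
      rw [cplx_union_singleton]; exact h.2.1
  | pair σ τ => exact h.2.2.1

lemma stepOK_val {F : Simplex → ℤ} {C : Cplx} {it : MorseItem}
    (h : StepOK F C it) : ∀ α ∈ it.faces, F α = it.val F := by
  cases it with
  | crit ν =>
      intro α hα
      simp only [MorseItem.faces, Finset.mem_singleton] at hα
      subst hα; rfl
  | pair σ τ =>
      intro α hα
      simp only [MorseItem.faces, Finset.mem_insert, Finset.mem_singleton] at hα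
      rcases hα with rfl | rfl
      · rfl
      · exact (h.2.2.2.2).symm

lemma sub_simp (C B S : Cplx) (hC : IsSimpComplex C) (hS : IsSimpComplex S)
    (hsub : C ∪ B ⊆ S)
    (hcl : ∀ β ∈ B, ∀ η : Simplex, η ⊆ β → η.Nonempty → η ∈ C ∪ B) :
    IsSimpComplex (C ∪ B) := by
  constructor
  · exact fun τ hτ => hS.1 τ (hsub hτ)
  · intro τ hτ σ hσ hσne
    rcases Finset.mem_union.1 hτ with h | h
    · exact Finset.mem_union_left _ (hC.2 τ h σ hσ hσne)
    · exact hcl τ h σ hσ hσne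

lemma closure_swap {C A B S : Cplx} (hS : IsSimpComplex S)
    (hSeq : S = C ∪ A ∪ B) (hne : ∀ α ∈ A, ∀ β ∈ B, ¬ α ⊆ β) :
    ∀ β ∈ B, ∀ η : Simplex, η ⊆ β → η.Nonempty → η ∈ C ∪ B := by
  intro β hβ η hη hηne
  have hβS : β ∈ S := by rw [hSeq]; exact Finset.mem_union_right _ hβ
  have hηS : η ∈ S := hS.2 β hβS η hη hηne
  rw [hSeq] at hηS
  rcases Finset.mem_union.1 hηS with h | h
  · rcases Finset.mem_union.1 h with h | h
    · exact Finset.mem_union_left _ h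
    · exact absurd hη (hne η h β hβ)
  · exact Finset.mem_union_right _ h

lemma swap_step (F : Simplex → ℤ) (C : Cplx) (a b : MorseItem)
    (hC : IsSimpComplex C)
    (hne : ∀ α ∈ a.faces, ∀ β ∈ b.faces, ¬ α ⊆ β)
    (h1 : StepOK F C a) (h2 : StepOK F (C ∪ a.faces) b) :
    StepOK F C b ∧ StepOK F (C ∪ b.faces) a := by
  have hS : IsSimpComplex (C ∪ a.faces ∪ b.faces) := stepOK_simp h2
  have hcl := closure_swap hS rfl hne
  have hCB : IsSimpComplex (C ∪ b.faces) :=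
    sub_simp C b.faces _ hC hS
      (Finset.union_subset
        (fun t ht => Finset.mem_union_left _ (Finset.mem_union_left _ ht))
        (fun t ht => Finset.mem_union_right _ ht)) hcl
  have hanotb : ∀ α ∈ a.faces, α ∉ C ∪ b.faces := by
    intro α hα hmem
    rcases Finset.mem_union.1 hmem with h | h
    · cases a with
      | crit ν =>
          simp only [MorseItem.faces, Finset.mem_singleton] at hα
          subst hα; exact h1.1 h
      | pair σ τ =>
          simp only [MorseItem.faces, Finset.mem_insert, Finset.mem_singleton] at hα
          rcases hα with rfl | rfl
          · exact h1.1 h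
          · exact h1.2.1 h
    · exact hne α hα α h (subset_refl α)
  have hbnotC : ∀ β ∈ b.faces, β ∉ C := by
    intro β hβ hmem
    have hmem' : β ∈ C ∪ a.faces := Finset.mem_union_left _ hmem
    cases b with
    | crit ν =>
        simp only [MorseItem.faces, Finset.mem_singleton] at hβ
        subst hβ; exact h2.1 hmem'
    | pair σ τ =>
        simp only [MorseItem.faces, Finset.mem_insert, Finset.mem_singleton] at hβ
        rcases hβ with rfl | rfl
        · exact h2.1 hmem'
        · exact h2.2.1 hmem'
  have hUC : (C ∪ b.faces) ∪ a.faces = C ∪ a.faces ∪ b.faces :=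
    Finset.union_right_comm C b.faces a.faces
  constructor
  · -- StepOK F C b
    cases b with
    | crit ν =>
        have hν : ν ∈ MorseItem.faces (.crit ν) := by simp [MorseItem.faces]
        refine ⟨hbnotC ν hν, ?_, ?_⟩
        · have h' : IsSimpComplex (C ∪ (MorseItem.crit ν).faces) := hCB
          show IsSimpComplex (insert ν C)
          rw [← cplx_union_singleton]; exact h'
        · intro ρ hρ hsub
          refine h2.2.2 ρ ?_ hsub
          rcases Finset.mem_insert.1 hρ with h | h
          · exact h ▸ Finset.mem_insert_self _ _
          · exact Finset.mem_insert_of_mem (Finset.mem_union_left _ h)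
    | pair σ τ =>
        have hσ : σ ∈ MorseItem.faces (.pair σ τ) := by simp [MorseItem.faces]
        have hτ : τ ∈ MorseItem.faces (.pair σ τ) := by simp [MorseItem.faces]
        obtain ⟨hb1, hb2, hb3, hfp, hFeq⟩ := h2
        refine ⟨hbnotC σ hσ, hbnotC τ hτ, hCB, ?_, hFeq⟩
        refine ⟨Finset.mem_union_right _ hσ, Finset.mem_union_right _ hτ, hfp.2.2.1, ?_⟩
        intro ρ hρ hsub
        refine hfp.2.2.2 ρ ?_ hsub
        rcases Finset.mem_union.1 hρ with h | h
        · exact Finset.mem_union_left _ (Finset.mem_union_left _ h)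
        · exact Finset.mem_union_right _ h
  · -- StepOK F (C ∪ b.faces) a
    cases a with
    | crit ν =>
        have hν : ν ∈ MorseItem.faces (.crit ν) := by simp [MorseItem.faces]
        refine ⟨hanotb ν hν, ?_, ?_⟩
        · show IsSimpComplex (insert ν (C ∪ b.faces))
          rw [← cplx_union_singleton]
          have h' : (C ∪ b.faces) ∪ (MorseItem.crit ν).faces
              = C ∪ (MorseItem.crit ν).faces ∪ b.faces := hUC
          show IsSimpComplex ((C ∪ b.faces) ∪ (MorseItem.crit ν).faces)
          rw [h']; exact hS
        · intro ρ hρ hsub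
          rcases Finset.mem_insert.1 hρ with h | h
          · exact h
          · rcases Finset.mem_union.1 h with h | h
            · exact h1.2.2 ρ (Finset.mem_insert_of_mem h) hsub
            · exact absurd hsub (hne ν hν ρ h)
    | pair σ τ =>
        have hσ : σ ∈ MorseItem.faces (.pair σ τ) := by simp [MorseItem.faces]
        have hτ : τ ∈ MorseItem.faces (.pair σ τ) := by simp [MorseItem.faces]
        obtain ⟨ha1, ha2, ha3, hfp, hFeq⟩ := h1
        refine ⟨hanotb σ hσ, hanotb τ hτ, ?_, ?_, hFeq⟩
        · show IsSimpComplex ((C ∪ b.faces) ∪ (MorseItem.pair σ τ).faces)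
          rw [hUC]; exact hS
        · refine ⟨Finset.mem_union_right _ hσ, Finset.mem_union_right _ hτ,
            hfp.2.2.1, ?_⟩
          intro ρ hρ hsub
          have hρ' : ρ ∈ C ∪ (MorseItem.pair σ τ).faces ∪ b.faces := by
            rw [← hUC]; exact hρ
          rcases Finset.mem_union.1 hρ' with h | h
          · exact hfp.2.2.2 ρ h hsub
          · exact absurd hsub.subset (hne σ hσ ρ h)

lemma swseq_swap_ind (F : Simplex → ℤ) (a b : MorseItem)
    (hne : ∀ α ∈ a.faces, ∀ β ∈ b.faces, ¬ α ⊆ β) :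
    ∀ (l₁ : List MorseItem) (C : Cplx) (l₂ : List MorseItem),
      IsSimpComplex C → SWSeq F C (l₁ ++ a :: b :: l₂) →
      SWSeq F C (l₁ ++ b :: a :: l₂) := by
  intro l₁
  induction l₁ with
  | nil =>
      intro C l₂ hC hseq
      obtain ⟨h1, h2, hrest⟩ := hseq
      obtain ⟨g1, g2⟩ := swap_step F C a b hC hne h1 h2
      refine ⟨g1, g2, ?_⟩
      have hUC : (C ∪ b.faces) ∪ a.faces = (C ∪ a.faces) ∪ b.faces :=
        Finset.union_right_comm C b.faces a.faces
      rw [hUC]; exact hrest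
  | cons x xs ih =>
      intro C l₂ hC hseq
      obtain ⟨hx, hrest⟩ := hseq
      exact ⟨hx, ih (C ∪ x.faces) l₂ (stepOK_simp hx) hrest⟩

end Aux

theorem exchange_lemma (K : Cplx) (F : Simplex → ℤ)
    (l₁ l₂ : List MorseItem) (a b : MorseItem)
    (hK : IsSimpComplex K) (hF : IsStackOn K F)
    (hseq : SWSeq F ∅ (l₁ ++ a :: b :: l₂))
    (hbuild : List.foldl (fun C it => C ∪ it.faces) ∅ (l₁ ++ a :: b :: l₂) = K)
    (hval : MorseItem.val F b < MorseItem.val F a) :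
    SWSeq F ∅ (l₁ ++ b :: a :: l₂) := by
  have hmid : SWSeq F (List.foldl (fun C it => C ∪ it.faces) ∅ l₁) (a :: b :: l₂) :=
    swseq_append F l₁ ∅ _ hseq
  set D := List.foldl (fun (C : Cplx) (it : MorseItem) => C ∪ it.faces) ∅ l₁ with hD
  have h1 : StepOK F D a := hmid.1
  have h2 : StepOK F (D ∪ a.faces) b := hmid.2.1
  have hfold : List.foldl (fun (C : Cplx) (it : MorseItem) => C ∪ it.faces) ∅
      (l₁ ++ a :: b :: l₂)
      = List.foldl (fun C it => C ∪ it.faces) ((D ∪ a.faces) ∪ b.faces) l₂ := by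
    rw [List.foldl_append]; rfl
  have hsubK : (D ∪ a.faces) ∪ b.faces ⊆ K := by
    rw [← hbuild, hfold]; exact build_mono _ _
  have hne : ∀ α ∈ a.faces, ∀ β ∈ b.faces, ¬ α ⊆ β := by
    intro α hα β hβ hsub
    have hαK : α ∈ K := hsubK (Finset.mem_union_left _ (Finset.mem_union_right _ hα))
    have hβK : β ∈ K := hsubK (Finset.mem_union_right _ hβ)
    have hle := hF α hαK β hβK hsub
    rw [stepOK_val h1 α hα, stepOK_val h2 β hβ] at hle
    omega
  have hEmpty : IsSimpComplex (∅ : Cplx) := by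
    constructor <;> simp
  exact swseq_swap_ind F a b hne l₁ ∅ l₂ hEmpty hseq
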